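/- arXiv:1507.01142 — 4 statements merged into one kernel-verified Lean document; each statement's English description precedes it below -/
import Mathlib

section
/- In a real inner product space, if d + Au + B = g, d ⊥ g, d ⊥ Au, (B, d) = -|d|², and (Au, g) = |Au|² (i.e. P = (Au,g)), then |B - g/2|² = |d + g/2|² and |B - g/2|² = |d - g/2|². -/
open scoped InnerProductSpace

theorem stmt_2 {H : Type*} [NormedAddCommGroup H] [InnerProductSpace ℝ H]
    (d Au B g : H)
    (heq : d + Au + B = g)
    (h1 : ⟪d, g⟫_ℝ = 0) (h2 : ⟪d, Au⟫_ℝ = 0)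
    (h3 : ⟪B, d⟫_ℝ = -‖d‖ ^ 2)
    (h4 : ⟪Au, g⟫_ℝ = ‖Au‖ ^ 2) :
    ‖B - (1 / 2 : ℝ) • g‖ ^ 2 = ‖d + (1 / 2 : ℝ) • g‖ ^ 2 ∧
    ‖B - (1 / 2 : ℝ) • g‖ ^ 2 = ‖d - (1 / 2 : ℝ) • g‖ ^ 2 := by
  have hAu : ⟪Au, d + Au + B⟫_ℝ = ⟪Au, g⟫_ℝ := by rw [heq]
  have hg : ⟪g, d + Au + B⟫_ℝ = ⟪g, g⟫_ℝ := by rw [heq]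
  have hB : ⟪B, d + Au + B⟫_ℝ = ⟪B, g⟫_ℝ := by rw [heq]
  simp only [inner_add_right, real_inner_self_eq_norm_sq] at hAu hg hB
  have c1 : ⟪Au, d⟫_ℝ = ⟪d, Au⟫_ℝ := real_inner_comm _ _
  have c2 : ⟪g, Au⟫_ℝ = ⟪Au, g⟫_ℝ := real_inner_comm _ _
  have c3 : ⟪g, d⟫_ℝ = ⟪d, g⟫_ℝ := real_inner_comm _ _
  have c4 : ⟪g, B⟫_ℝ = ⟪B, g⟫_ℝ := real_inner_comm _ _
  have c5 : ⟪Au, B⟫_ℝ = ⟪B, Au⟫_ℝ := real_inner_comm _ _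
  have hAuB : ⟪B, Au⟫_ℝ = 0 := by linarith
  have hBg : ⟪B, g⟫_ℝ = ‖g‖ ^ 2 - ‖Au‖ ^ 2 := by linarith
  have hBB : ‖B‖ ^ 2 = ‖g‖ ^ 2 - ‖Au‖ ^ 2 + ‖d‖ ^ 2 := by linarith
  constructor
  · rw [norm_sub_sq_real, norm_add_sq_real, real_inner_smul_right,
      real_inner_smul_right, norm_smul]
    rw [h1, hBg, hBB]
    norm_num
    ring
  · rw [norm_sub_sq_real, norm_sub_sq_real, real_inner_smul_right,
      real_inner_smul_right, norm_smul]
    rw [h1, hBg, hBB]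
    norm_num
    ring
end

section
/- With ρ := λP - s < 0 and positive reals e, E, P, G² satisfying G² > P and 2e > E (taking λ = 2 in context, but stated for general arrangement), define α = λ - γ - (e/E)β and β as above; then α² + 4β = (1/(G²-P) + (e/E)/(2e-E))² ρ² + 4ρ((1 - e/E)/(2e-E) - 1/(G²-P)) + 4, and this quantity is strictly positive for all ρ (the discriminant of the quadratic in ρ is negative). -/
/-- With `ρ = λP − s < 0`, `λ = 2`, `γ = ρ/(G²−P)`, `β = ρ/(2e−E)`,
`α = 2 − γ − (e/E)β`, the quantity `α² + 4β` equals the displayed quadratic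
in `ρ`, and is strictly positive. -/
theorem stmt_9 (e E P G2 ρ γ β α : ℝ)
    (hE : 0 < E) (heE : e ≤ E) (he : 0 < e) (hP : 0 < P)
    (hG : P < G2) (h2e : E < 2 * e)
    (hρ : ρ < 0)
    (hγ : γ = ρ / (G2 - P)) (hβ : β = ρ / (2 * e - E))
    (hα : α = 2 - γ - (e / E) * β) :
    α ^ 2 + 4 * β
      = (1 / (G2 - P) + (e / E) / (2 * e - E)) ^ 2 * ρ ^ 2
        + 4 * ρ * ((1 - e / E) / (2 * e - E) - 1 / (G2 - P)) + 4 ∧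
    0 < α ^ 2 + 4 * β := by
  have hGP : (0:ℝ) < G2 - P := by linarith
  have h2eE : (0:ℝ) < 2 * e - E := by linarith
  set a : ℝ := 1 / (G2 - P) + (e / E) / (2 * e - E) with ha
  set b : ℝ := (1 - e / E) / (2 * e - E) - 1 / (G2 - P) with hb
  have hid : α ^ 2 + 4 * β = a ^ 2 * ρ ^ 2 + 4 * ρ * b + 4 := by
    rw [ha, hb, hα, hγ, hβ]
    field_simp
    ring
  have hab1 : 0 < a + b := by
    rw [ha, hb]
    have : a + b = 1 / (2 * e - E) := by
      rw [ha, hb]; field_simp; ring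
    rw [← ha, ← hb, this]
    positivity
  have hab2 : 0 < a - b := by
    have h1 : 0 < 1 / (G2 - P) := by positivity
    have h2 : 0 ≤ (e / E - (1 - e / E)) / (2 * e - E) := by
      apply div_nonneg _ h2eE.le
      have : 1 ≤ 2 * (e / E) := by
        rw [show 2 * (e / E) = 2 * e / E by ring, le_div_iff₀ hE]
        linarith
      linarith
    have : a - b = 2 * (1 / (G2 - P)) + (e / E - (1 - e / E)) / (2 * e - E) := by
      rw [ha, hb]; ring
    rw [this]; linarith
  have ha0 : 0 < a := by linarith
  constructor
  · exact hid
  · rw [hid]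
    nlinarith [sq_nonneg (a * a * ρ + 2 * b), mul_pos hab1 hab2, sq_nonneg a, mul_pos ha0 ha0]
end

section
/- Let α : ℤ² → ℂ be a function supported on S₁ ∪ S₂ ∪ S₃ where S₁ = {±(1,0),±(0,1)}, S₂ = {±(1,1),±(1,-1)}, S₃ = {±(1,2),±(1,-2),±(2,1),±(2,-1)}, satisfying the reality condition α(-k) = conj(α(k)) and the 28 bilinear vanishing conditions: α(0,-1)α(2,1) = α(0,1)α(2,-1); α(1,0)α(-1,2) = α(-1,0)α(1,2); α(0,1)α(-2,-1) = α(0,-1)α(-2,1); α(-1,0)α(1,-2) = α(1,0)α(-1,-2); α(1,0)α(1,2) = α(0,1)α(2,1); α(0,1)α(-2,1) = α(-1,0)α(-1,2); α(0,-1)α(2,-1) = α(1,0)α(1,-2); α(-1,0)α(-1,-2) = α(0,-1)α(-2,-1); α(2,1)α(1,-1) = α(2,-1)α(1,1); α(-1,2)α(1,1) = α(1,2)α(-1,1); α(-2,-1)α(-1,1) = α(-2,1)α(-1,-1); α(1,-2)α(-1,-1) = α(-1,-2)α(1,-1); and the products α(0,1)α(1,2), α(1,0)α(2,1), α(0,1)α(-1,2),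 α(-1,0)α(-2,1), α(0,-1)α(1,-2), α(0,-1)α(-1,-2), α(1,0)α(2,-1), α(-1,0)α(-2,-1), α(1,2)α(1,1), α(2,1)α(1,1), α(-1,2)α(-1,1), α(-2,1)α(-1,1), α(-1,-2)α(-1,-1), α(1,-2)α(1,-1), α(1,-1)α(2,-1), α(-2,-1)α(-1,-1) all vanish. If α(k₀) ≠ 0 for some k₀ ∈ S₃, then α(k) = 0 for all k ∈ S₁ ∪ S₂. -/
def S1 : Set (ℤ × ℤ) := {(1, 0), (-1, 0), (0, 1), (0, -1)}

def S2 : Set (ℤ × ℤ) := {(1, 1), (-1, -1), (-1, 1), (1, -1)}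

def S3 : Set (ℤ × ℤ) :=
  {(1, 2), (-1, -2), (1, -2), (-1, 2), (2, 1), (-2, -1), (2, -1), (-2, 1)}

/-- If the Fourier coefficients of a chained ghost solution (λ = 2, μ₋ = 1,
μ₊ = 5) do not vanish at some wave vector of squared norm 5, then they vanish
at all wave vectors of squared norm 1 and 2. -/
theorem stmt_17 (α : ℤ × ℤ → ℂ)
    (hsupp : ∀ k : ℤ × ℤ, k ∉ S1 ∪ S2 ∪ S3 → α k = 0)
    (hreal : ∀ k : ℤ × ℤ, α (-k) = starRingEnd ℂ (α k))
    (e1 : α (0, -1) * α (2, 1) = α (0, 1) * α (2, -1))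
    (e2 : α (1, 0) * α (-1, 2) = α (-1, 0) * α (1, 2))
    (e3 : α (0, 1) * α (-2, -1) = α (0, -1) * α (-2, 1))
    (e4 : α (-1, 0) * α (1, -2) = α (1, 0) * α (-1, -2))
    (e5 : α (1, 0) * α (1, 2) = α (0, 1) * α (2, 1))
    (e6 : α (0, 1) * α (-2, 1) = α (-1, 0) * α (-1, 2))
    (e7 : α (0, -1) * α (2, -1) = α (1, 0) * α (1, -2))
    (e8 : α (-1, 0) * α (-1, -2) = α (0, -1) * α (-2, -1))
    (e9 : α (2, 1) * α (1, -1) = α (2, -1) * α (1, 1))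
    (e10 : α (-1, 2) * α (1, 1) = α (1, 2) * α (-1, 1))
    (e11 : α (-2, -1) * α (-1, 1) = α (-2, 1) * α (-1, -1))
    (e12 : α (1, -2) * α (-1, -1) = α (-1, -2) * α (1, -1))
    (z1 : α (0, 1) * α (1, 2) = 0)
    (z2 : α (1, 0) * α (2, 1) = 0)
    (z3 : α (0, 1) * α (-1, 2) = 0)
    (z4 : α (-1, 0) * α (-2, 1) = 0)
    (z5 : α (0, -1) * α (1, -2) = 0)
    (z6 : α (0, -1) * α (-1, -2) = 0)
    (z7 : α (1, 0) * α (2, -1) = 0)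
    (z8 : α (-1, 0) * α (-2, -1) = 0)
    (z9 : α (1, 2) * α (1, 1) = 0)
    (z10 : α (2, 1) * α (1, 1) = 0)
    (z11 : α (-1, 2) * α (-1, 1) = 0)
    (z12 : α (-2, 1) * α (-1, 1) = 0)
    (z13 : α (-1, -2) * α (-1, -1) = 0)
    (z14 : α (1, -2) * α (1, -1) = 0)
    (z15 : α (1, -1) * α (2, -1) = 0)
    (z16 : α (-2, -1) * α (-1, -1) = 0)
    (hne : ∃ k₀ ∈ S3, α k₀ ≠ 0) :
    ∀ k ∈ S1 ∪ S2, α k = 0 := by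
  have hr : ∀ a b : ℤ, α (-a, -b) = starRingEnd ℂ (α (a, b)) := fun a b => hreal (a, b)
  -- conjugate identities for the specific points we need
  have c10 : α (-1, 0) = starRingEnd ℂ (α (1, 0)) := by simpa using hr 1 0
  have c01 : α (0, -1) = starRingEnd ℂ (α (0, 1)) := by simpa using hr 0 1
  have c11 : α (-1, -1) = starRingEnd ℂ (α (1, 1)) := by simpa using hr 1 1
  have c1m1 : α (-1, 1) = starRingEnd ℂ (α (1, -1)) := by simpa using hr 1 (-1)
  have c12 : α (-1, -2) = starRingEnd ℂ (α (1, 2)) := by simpa using hr 1 2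
  have c1m2 : α (-1, 2) = starRingEnd ℂ (α (1, -2)) := by simpa using hr 1 (-2)
  have c21 : α (-2, -1) = starRingEnd ℂ (α (2, 1)) := by simpa using hr 2 1
  have c2m1 : α (-2, 1) = starRingEnd ℂ (α (2, -1)) := by simpa using hr 2 (-1)
  -- reduce the nonvanishing hypothesis to one of the four "positive" norm-5 points
  have main : α (1, 2) ≠ 0 ∨ α (1, -2) ≠ 0 ∨ α (2, 1) ≠ 0 ∨ α (2, -1) ≠ 0 := by
    obtain ⟨k₀, hk₀, hα⟩ := hne
    simp only [S3, Set.mem_insert_iff, Set.mem_singleton_iff] at hk₀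
    rcases hk₀ with h | h | h | h | h | h | h | h <;> subst h
    · exact Or.inl hα
    · exact Or.inl (by rw [c12] at hα; exact fun h => hα (by rw [h, map_zero]))
    · exact Or.inr (Or.inl hα)
    · exact Or.inr (Or.inl (by rw [c1m2] at hα; exact fun h => hα (by rw [h, map_zero])))
    · exact Or.inr (Or.inr (Or.inl hα))
    · exact Or.inr (Or.inr (Or.inl (by rw [c21] at hα; exact fun h => hα (by rw [h, map_zero]))))
    · exact Or.inr (Or.inr (Or.inr hα))
    · exact Or.inr (Or.inr (Or.inr (by rw [c2m1] at hα; exact fun h => hα (by rw [h, map_zero]))))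
  have key : α (1, 0) = 0 ∧ α (0, 1) = 0 ∧ α (1, 1) = 0 ∧ α (1, -1) = 0 := by
    rcases main with hA | hB | hC | hD
    · -- A = α(1,2) ≠ 0
      have q0 : α (0, 1) = 0 := (mul_eq_zero.mp z1).resolve_right hA
      have u0 : α (1, 1) = 0 := (mul_eq_zero.mp z9).resolve_left hA
      have p0 : α (1, 0) = 0 := by
        rw [q0, zero_mul] at e5
        exact (mul_eq_zero.mp e5).resolve_right hA
      have v0 : α (1, -1) = 0 := by
        rw [u0, mul_zero] at e10
        have := (mul_eq_zero.mp e10.symm).resolve_left hA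
        rw [c1m1] at this
        exact by simpa using this
      exact ⟨p0, q0, u0, v0⟩
    · -- B = α(1,-2) ≠ 0
      have hB' : α (-1, 2) ≠ 0 := by
        rw [c1m2]; exact fun h => hB (by simpa using h)
      have q0 : α (0, 1) = 0 := (mul_eq_zero.mp z3).resolve_right hB'
      have v0 : α (1, -1) = 0 := (mul_eq_zero.mp z14).resolve_left hB
      have p0 : α (1, 0) = 0 := by
        have : α (0, -1) = 0 := (mul_eq_zero.mp z5).resolve_right hB
        rw [this, zero_mul] at e7
        exact (mul_eq_zero.mp e7.symm).resolve_right hB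
      have u0 : α (1, 1) = 0 := by
        rw [v0, mul_zero] at e12
        have := (mul_eq_zero.mp e12).resolve_left hB
        rw [c11] at this
        exact by simpa using this
      exact ⟨p0, q0, u0, v0⟩
    · -- C = α(2,1) ≠ 0
      have p0 : α (1, 0) = 0 := (mul_eq_zero.mp z2).resolve_right hC
      have u0 : α (1, 1) = 0 := (mul_eq_zero.mp z10).resolve_left hC
      have q0 : α (0, 1) = 0 := by
        rw [p0, zero_mul] at e5
        exact (mul_eq_zero.mp e5.symm).resolve_right hC
      have v0 : α (1, -1) = 0 := by
        rw [u0, mul_zero] at e9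
        exact (mul_eq_zero.mp e9).resolve_left hC
      exact ⟨p0, q0, u0, v0⟩
    · -- D = α(2,-1) ≠ 0
      have p0 : α (1, 0) = 0 := (mul_eq_zero.mp z7).resolve_right hD
      have v0 : α (1, -1) = 0 := (mul_eq_zero.mp z15).resolve_right hD
      have q0 : α (0, 1) = 0 := by
        rw [p0, zero_mul] at e7
        have := (mul_eq_zero.mp e7).resolve_right hD
        rw [c01] at this
        exact by simpa using this
      have u0 : α (1, 1) = 0 := by
        rw [v0, mul_zero] at e9
        exact (mul_eq_zero.mp e9.symm).resolve_left hD
      exact ⟨p0, q0, u0, v0⟩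
  obtain ⟨p0, q0, u0, v0⟩ := key
  intro k hk
  simp only [S1, S2, Set.mem_union, Set.mem_insert_iff, Set.mem_singleton_iff] at hk
  rcases hk with (h | h | h | h) | (h | h | h | h) <;> subst h
  · exact p0
  · rw [c10, p0, map_zero]
  · exact q0
  · rw [c01, q0, map_zero]
  · exact u0
  · rw [c11, u0, map_zero]
  · rw [c1m1, v0, map_zero]
  · exact v0
end

section
/- Under the hypotheses of the previous combinatorial lemma (α supported on S₁ ∪ S₂ ∪ S₃ with the reality condition and the bilinear vanishing conditions), either α vanishes identically on S₁ ∪ S₂, or α vanishes identically on S₃. -/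
/-- Dichotomy for the Fourier coefficients of a chained ghost solution with
λ = 2: either they vanish on all wave vectors of squared norm 1 and 2, or on
all wave vectors of squared norm 5. -/
theorem stmt_18 (α : ℤ × ℤ → ℂ)
    (hsupp : ∀ k : ℤ × ℤ, k ∉ S1 ∪ S2 ∪ S3 → α k = 0)
    (hreal : ∀ k : ℤ × ℤ, α (-k) = starRingEnd ℂ (α k))
    (e1 : α (0, -1) * α (2, 1) = α (0, 1) * α (2, -1))
    (e2 : α (1, 0) * α (-1, 2) = α (-1, 0) * α (1, 2))
    (e3 : α (0, 1) * α (-2, -1) = α (0, -1) * α (-2, 1))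
    (e4 : α (-1, 0) * α (1, -2) = α (1, 0) * α (-1, -2))
    (e5 : α (1, 0) * α (1, 2) = α (0, 1) * α (2, 1))
    (e6 : α (0, 1) * α (-2, 1) = α (-1, 0) * α (-1, 2))
    (e7 : α (0, -1) * α (2, -1) = α (1, 0) * α (1, -2))
    (e8 : α (-1, 0) * α (-1, -2) = α (0, -1) * α (-2, -1))
    (e9 : α (2, 1) * α (1, -1) = α (2, -1) * α (1, 1))
    (e10 : α (-1, 2) * α (1, 1) = α (1, 2) * α (-1, 1))
    (e11 : α (-2, -1) * α (-1, 1) = α (-2, 1) * α (-1, -1))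
    (e12 : α (1, -2) * α (-1, -1) = α (-1, -2) * α (1, -1))
    (z1 : α (0, 1) * α (1, 2) = 0)
    (z2 : α (1, 0) * α (2, 1) = 0)
    (z3 : α (0, 1) * α (-1, 2) = 0)
    (z4 : α (-1, 0) * α (-2, 1) = 0)
    (z5 : α (0, -1) * α (1, -2) = 0)
    (z6 : α (0, -1) * α (-1, -2) = 0)
    (z7 : α (1, 0) * α (2, -1) = 0)
    (z8 : α (-1, 0) * α (-2, -1) = 0)
    (z9 : α (1, 2) * α (1, 1) = 0)
    (z10 : α (2, 1) * α (1, 1) = 0)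
    (z11 : α (-1, 2) * α (-1, 1) = 0)
    (z12 : α (-2, 1) * α (-1, 1) = 0)
    (z13 : α (-1, -2) * α (-1, -1) = 0)
    (z14 : α (1, -2) * α (1, -1) = 0)
    (z15 : α (1, -1) * α (2, -1) = 0)
    (z16 : α (-2, -1) * α (-1, -1) = 0)
    : (∀ k ∈ S1 ∪ S2, α k = 0) ∨ (∀ k ∈ S3, α k = 0) := by
  have cz : ∀ x : ℂ, starRingEnd ℂ x = 0 → x = 0 := fun x h => by
    simpa using congrArg (starRingEnd ℂ) h
  have c1 : α (-1, 0) = starRingEnd ℂ (α (1, 0)) := by simpa using hreal (1, 0)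
  have c2 : α (0, -1) = starRingEnd ℂ (α (0, 1)) := by simpa using hreal (0, 1)
  have c3 : α (-1, -1) = starRingEnd ℂ (α (1, 1)) := by simpa using hreal (1, 1)
  have c4 : α (1, -1) = starRingEnd ℂ (α (-1, 1)) := by simpa using hreal (-1, 1)
  have c5 : α (-1, -2) = starRingEnd ℂ (α (1, 2)) := by simpa using hreal (1, 2)
  have c6 : α (-2, -1) = starRingEnd ℂ (α (2, 1)) := by simpa using hreal (2, 1)
  have c7 : α (-1, 2) = starRingEnd ℂ (α (1, -2)) := by simpa using hreal (1, -2)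
  have c8 : α (-2, 1) = starRingEnd ℂ (α (2, -1)) := by simpa using hreal (2, -1)
  by_cases h3 : ∀ k ∈ S3, α k = 0
  · exact Or.inr h3
  push_neg at h3
  obtain ⟨k, hk, hkne⟩ := h3
  left
  have key : α (1, 2) ≠ 0 ∨ α (2, 1) ≠ 0 ∨ α (1, -2) ≠ 0 ∨ α (2, -1) ≠ 0 := by
    simp only [S3, Set.mem_insert_iff, Set.mem_singleton_iff] at hk
    rcases hk with h | h | h | h | h | h | h | h <;> subst h
    · exact Or.inl hkne
    · exact Or.inl fun h0 => hkne (by rw [c5, h0, map_zero])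
    · exact Or.inr (Or.inr (Or.inl hkne))
    · exact Or.inr (Or.inr (Or.inl fun h0 => hkne (by rw [c7, h0, map_zero])))
    · exact Or.inr (Or.inl hkne)
    · exact Or.inr (Or.inl fun h0 => hkne (by rw [c6, h0, map_zero]))
    · exact Or.inr (Or.inr (Or.inr hkne))
    · exact Or.inr (Or.inr (Or.inr fun h0 => hkne (by rw [c8, h0, map_zero])))
  have main : α (1, 0) = 0 ∧ α (0, 1) = 0 ∧ α (1, 1) = 0 ∧ α (-1, 1) = 0 := by
    rcases key with hA | hB | hC | hD
    · have h01 : α (0, 1) = 0 := (mul_eq_zero.mp z1).resolve_right hA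
      have h11 : α (1, 1) = 0 := (mul_eq_zero.mp z9).resolve_left hA
      have h10 : α (1, 0) = 0 := by
        rw [h01, zero_mul] at e5
        exact (mul_eq_zero.mp e5).resolve_right hA
      have hm : α (-1, 1) = 0 := by
        rw [h11, mul_zero] at e10
        exact (mul_eq_zero.mp e10.symm).resolve_left hA
      exact ⟨h10, h01, h11, hm⟩
    · have h10 : α (1, 0) = 0 := (mul_eq_zero.mp z2).resolve_right hB
      have h11 : α (1, 1) = 0 := (mul_eq_zero.mp z10).resolve_left hB
      have h01 : α (0, 1) = 0 := by
        rw [h10, zero_mul] at e5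
        exact (mul_eq_zero.mp e5.symm).resolve_right hB
      have hm : α (-1, 1) = 0 := by
        rw [h11, mul_zero] at e9
        have := (mul_eq_zero.mp e9).resolve_left hB
        exact cz _ (c4 ▸ this)
      exact ⟨h10, h01, h11, hm⟩
    · have h01 : α (0, 1) = 0 := by
        have := (mul_eq_zero.mp z5).resolve_right hC
        exact cz _ (c2 ▸ this)
      have hm : α (-1, 1) = 0 := by
        have := (mul_eq_zero.mp z14).resolve_left hC
        exact cz _ (c4 ▸ this)
      have h10 : α (1, 0) = 0 := by
        rw [c2, h01, map_zero, zero_mul] at e7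
        exact (mul_eq_zero.mp e7.symm).resolve_right hC
      have h11 : α (1, 1) = 0 := by
        rw [c4, hm, map_zero, mul_zero] at e12
        have := (mul_eq_zero.mp e12).resolve_left hC
        exact cz _ (c3 ▸ this)
      exact ⟨h10, h01, h11, hm⟩
    · have h10 : α (1, 0) = 0 := (mul_eq_zero.mp z7).resolve_right hD
      have hm : α (-1, 1) = 0 := by
        have := (mul_eq_zero.mp z15).resolve_right hD
        exact cz _ (c4 ▸ this)
      have h01 : α (0, 1) = 0 := by
        rw [h10, zero_mul] at e7
        have := (mul_eq_zero.mp e7).resolve_right hD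
        exact cz _ (c2 ▸ this)
      have h11 : α (1, 1) = 0 := by
        rw [c4, hm, map_zero, mul_zero] at e9
        exact (mul_eq_zero.mp e9.symm).resolve_left hD
      exact ⟨h10, h01, h11, hm⟩
  obtain ⟨h10, h01, h11, hm⟩ := main
  intro k hk
  simp only [S1, S2, Set.mem_union, Set.mem_insert_iff, Set.mem_singleton_iff] at hk
  rcases hk with (h | h | h | h) | (h | h | h | h) <;> subst h
  · exact h10
  · rw [c1, h10, map_zero]
  · exact h01
  · rw [c2, h01, map_zero]
  · exact h11
  · rw [c3, h11, map_zero]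
  · exact hm
  · rw [c4, hm, map_zero]
end
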